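/- Let n be a positive integer with μ(n) = 0 (i.e., n is not square-free), H as above, and d_1 > 1 a divisor of γ(n). Then for every integer h ∈ H with ∑_{p|d_1} n/p − n/γ(n) < h < ∑_{p|d_1} n/p, one has ∑_{d | n, d ≠ d_1} μ(d) c_n(h + n/γ(n) − ∑_{p|d} n/p) = 0. -/

import Mathlib

open Polynomial Finset

/-- The Ramanujan sum `c_n(r) = ∑_{1 ≤ j ≤ n, gcd(j,n)=1} e^{2πijr/n}`. -/
noncomputable def ramanujanSum (n : ℕ) (r : ℤ) : ℂ :=
  ∑ j ∈ Finset.Icc 1 n, if Nat.gcd j n = 1 then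
    Complex.exp (2 * (Real.pi : ℂ) * Complex.I * (j : ℂ) * (r : ℂ) / (n : ℂ)) else 0

lemma exp_two_pi_I_int (m : ℤ) : Complex.exp (2 * (Real.pi : ℂ) * Complex.I * m) = 1 := by
  rw [show (2 * (Real.pi : ℂ) * Complex.I * m) = m * (2 * Real.pi * Complex.I) by ring]
  exact Complex.exp_int_mul_two_pi_mul_I m

lemma gcd_add_iff {n t : ℕ} (ht : ∀ q : ℕ, q.Prime → q ∣ n → q ∣ t) (j : ℕ) :
    Nat.gcd (j + t) n = 1 ↔ Nat.gcd j n = 1 := by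
  constructor <;> intro hc <;> by_contra hnc <;>
    obtain ⟨q, hq, hqj, hqn⟩ := Nat.Prime.not_coprime_iff_dvd.mp hnc
  · have hqjt : q ∣ j + t := Nat.dvd_add hqj (ht q hq hqn)
    have : q ∣ 1 := hc ▸ Nat.dvd_gcd hqjt hqn
    exact hq.one_lt.ne' (Nat.eq_one_of_dvd_one this)
  · have hqt := ht q hq hqn
    have hqj' : q ∣ j := by
      have := hqj
      rwa [add_comm, Nat.dvd_add_right hqt] at this
    have : q ∣ 1 := hc ▸ Nat.dvd_gcd hqj' hqn
    exact hq.one_lt.ne' (Nat.eq_one_of_dvd_one this)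

lemma ramanujanSum_eq_zero_of_pow (n p k : ℕ) (hn : 1 ≤ n) (hp : p.Prime)
    (hdvd : p ^ (k + 1) ∣ n) (r : ℤ) (hr : ¬((p : ℤ) ^ k ∣ r)) :
    ramanujanSum n r = 0 := by
  haveI : NeZero n := ⟨by omega⟩
  set t : ℕ := n / p ^ k with ht
  have hpk : p ^ k ∣ n := dvd_trans (pow_dvd_pow p (Nat.le_succ k)) hdvd
  have htn : p ^ k * t = n := Nat.mul_div_cancel' hpk
  have hpk0 : p ^ k ≠ 0 := pow_ne_zero k hp.pos.ne'
  have ht0 : t ≠ 0 := by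
    intro h0; rw [h0, mul_zero] at htn; omega
  have hq : ∀ q : ℕ, q.Prime → q ∣ n → q ∣ t := by
    intro q hq hqn
    rw [← htn] at hqn
    by_cases hqp : q = p
    · subst hqp
      have h2 : q ^ k * q ∣ q ^ k * t := by
        have : q ^ (k + 1) ∣ q ^ k * t := htn ▸ hdvd
        rwa [pow_succ] at this
      exact (mul_dvd_mul_iff_left hpk0).mp h2
    · exact (Nat.Coprime.pow_right k ((Nat.coprime_primes hq hp).mpr hqp)).dvd_of_dvd_mul_left hqn
  set f : ℕ → ℂ := fun j => if Nat.gcd j n = 1 then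
    Complex.exp (2 * (Real.pi : ℂ) * Complex.I * (j : ℂ) * (r : ℂ) / (n : ℂ)) else 0 with hf
  set g : ZMod n → ℂ := fun x => f x.val with hg
  have hn0 : (n : ℂ) ≠ 0 := Nat.cast_ne_zero.mpr (by omega)
  have hpC : (p : ℂ) ≠ 0 := Nat.cast_ne_zero.mpr hp.pos.ne'
  have htC : (t : ℂ) ≠ 0 := Nat.cast_ne_zero.mpr ht0
  have hpkC : ((p : ℂ)) ^ k ≠ 0 := pow_ne_zero k hpC
  have hnpt : (n : ℂ) = (p : ℂ) ^ k * (t : ℂ) := by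
    rw [← htn]; push_cast; ring
  -- step 1
  have e1 : ∑ x : ZMod n, g x = ∑ j ∈ Finset.range n, f j := by
    apply Finset.sum_nbij' (fun x : ZMod n => x.val) (fun j : ℕ => (j : ZMod n))
    · intro a _; exact Finset.mem_range.mpr (ZMod.val_lt a)
    · intro a _; exact Finset.mem_univ _
    · intro a _; exact ZMod.natCast_rightInverse a
    · intro a ha; exact ZMod.val_natCast_of_lt (Finset.mem_range.mp ha)
    · intro a _; rfl
  have hfn0 : f n = f 0 := by
    by_cases h1 : n = 1
    · subst h1
      simp only [hf, Nat.gcd_self, Nat.gcd_zero_left, if_pos rfl, Nat.cast_one, Nat.cast_zero]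
      rw [div_one, div_one, mul_zero, zero_mul, Complex.exp_zero]
      rw [show (2 * (Real.pi : ℂ) * Complex.I * (1:ℂ) * (r:ℂ)) = (r:ℂ) * (2 * Real.pi * Complex.I) by ring]
      exact Complex.exp_int_mul_two_pi_mul_I r
    · have g1 : Nat.gcd n n = n := Nat.gcd_self n
      have g2 : Nat.gcd 0 n = n := Nat.gcd_zero_left n
      rw [hf]; simp only [g1, g2]
      rw [if_neg (by omega), if_neg (by omega)]
  have step1 : ramanujanSum n r = ∑ x : ZMod n, g x := by
    have hL : ∑ j ∈ Finset.Icc 1 n, f j = (∑ j ∈ Finset.Ico 1 n, f j) + f n := by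
      rw [← Finset.Ico_add_one_right_eq_Icc, Finset.sum_Ico_succ_top (by omega)]
    have hR : ∑ j ∈ Finset.range n, f j = f 0 + ∑ j ∈ Finset.Ico 1 n, f j := by
      rw [Finset.range_eq_Ico]; exact Finset.sum_eq_sum_Ico_succ_bot (by omega) f
    show (∑ j ∈ Finset.Icc 1 n, f j) = _
    rw [e1, hL, hR, hfn0]; ring
  -- step 2
  set α : ℂ := Complex.exp (2 * (Real.pi : ℂ) * Complex.I * (r : ℂ) / ((p : ℂ) ^ k)) with hα
  have step2 : ∀ x : ZMod n, g (x + (t : ZMod n)) = α * g x := by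
    intro x
    have hxv : (x + (t : ZMod n)) = ((x.val + t : ℕ) : ZMod n) := by
      rw [Nat.cast_add, ZMod.natCast_rightInverse x]
    have hval : (x + (t : ZMod n)).val = (x.val + t) % n := by
      rw [hxv, ZMod.val_natCast]
    have hgcd : Nat.gcd ((x.val + t) % n) n = Nat.gcd (x.val + t) n := by
      rw [Nat.gcd_comm (x.val + t) n, Nat.gcd_rec n (x.val + t)]
    have hiff := gcd_add_iff hq x.val
    rw [hg]
    simp only [hval, hf, hgcd, hiff]
    by_cases hc : Nat.gcd x.val n = 1
    · rw [if_pos hc, if_pos hc]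
      have h0 : (x.val + t) % n + n * ((x.val + t) / n) = x.val + t := Nat.mod_add_div _ _
      have hcast : (((x.val + t) % n : ℕ) : ℂ) + (n : ℂ) * (((x.val + t) / n : ℕ) : ℂ)
          = (x.val : ℂ) + (t : ℂ) := by exact_mod_cast congrArg (fun z : ℕ => (z : ℂ)) h0
      have hmod : (((x.val + t) % n : ℕ) : ℂ)
          = (x.val : ℂ) + (t : ℂ) - (n : ℂ) * (((x.val + t) / n : ℕ) : ℂ) := by
        linear_combination hcast
      have key : ∀ (X : ℂ) (Q : ℕ),
          2 * (Real.pi : ℂ) * Complex.I * (X + (t : ℂ) - (p : ℂ) ^ k * (t : ℂ) * (Q : ℂ)) * (r : ℂ)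
              / ((p : ℂ) ^ k * (t : ℂ))
          = 2 * (Real.pi : ℂ) * Complex.I * (r : ℂ) / ((p : ℂ) ^ k)
            + 2 * (Real.pi : ℂ) * Complex.I * X * (r : ℂ) / ((p : ℂ) ^ k * (t : ℂ))
            + 2 * (Real.pi : ℂ) * Complex.I * ((-(Q : ℤ) * r : ℤ) : ℂ) := by
        intro X Q
        push_cast
        field_simp
        ring
      rw [hmod, hnpt, key (x.val : ℂ) ((x.val + t) / n), Complex.exp_add, Complex.exp_add,
        exp_two_pi_I_int, mul_one, ← hα]
    · rw [if_neg hc, if_neg hc, mul_zero]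
  have step3 : (∑ x : ZMod n, g x) = α * ∑ x : ZMod n, g x :=
    calc ∑ x : ZMod n, g x
        = ∑ x : ZMod n, g ((Equiv.addRight (t : ZMod n)) x) :=
          (Equiv.sum_comp (Equiv.addRight (t : ZMod n)) g).symm
      _ = ∑ x : ZMod n, α * g x := Finset.sum_congr rfl fun x _ => step2 x
      _ = α * ∑ x : ZMod n, g x := by rw [Finset.mul_sum]
  have hα1 : α ≠ 1 := by
    intro h1
    rw [hα, Complex.exp_eq_one_iff] at h1
    obtain ⟨m, hm⟩ := h1
    have hπ : (2 * (Real.pi : ℂ) * Complex.I) ≠ 0 := by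
      simp [Real.pi_ne_zero, Complex.I_ne_zero]
    have hstep : (2 * (Real.pi : ℂ) * Complex.I) * (r : ℂ)
        = (2 * (Real.pi : ℂ) * Complex.I) * ((m : ℂ) * (p : ℂ) ^ k) := by
      field_simp at hm
      linear_combination (2 * (Real.pi : ℂ) * Complex.I) * hm
    have h2 : (r : ℂ) = (m : ℂ) * (p : ℂ) ^ k := mul_left_cancel₀ hπ hstep
    apply hr
    refine ⟨m, ?_⟩
    have : (r : ℂ) = (((p : ℤ) ^ k * m : ℤ) : ℂ) := by push_cast; linear_combination h2
    exact_mod_cast this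
  have hz : (1 - α) * ∑ x : ZMod n, g x = 0 := by
    rw [sub_mul, one_mul, ← step3, sub_self]
  rcases mul_eq_zero.mp hz with h0 | h0
  · exact absurd (sub_eq_zero.mp h0).symm hα1
  · rw [step1, h0]

theorem ramanujan_sum_vanishing_nonsquarefree (n : ℕ) (hn : 1 ≤ n)
    (hμ : ArithmeticFunction.moebius n = 0) (d₁ : ℕ)
    (hd₁ : d₁ ∣ ∏ p ∈ n.primeFactors, p) (hd₁' : 1 < d₁) (h : ℕ)
    (hH : h < if Even n then n / 2 else n)
    (hlow : (∑ p ∈ d₁.primeFactors, ((n / p : ℕ) : ℤ)) -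
        ((n / (∏ p ∈ n.primeFactors, p) : ℕ) : ℤ) < (h : ℤ))
    (hhigh : (h : ℤ) < ∑ p ∈ d₁.primeFactors, ((n / p : ℕ) : ℤ)) :
    ∑ d ∈ n.divisors.erase d₁, (ArithmeticFunction.moebius d : ℂ) *
        ramanujanSum n
          ((h : ℤ) + ((n / (∏ p ∈ n.primeFactors, p) : ℕ) : ℤ) -
            ∑ p ∈ d.primeFactors, ((n / p : ℕ) : ℤ)) = 0 := by
  classical
  set γ : ℕ := ∏ p ∈ n.primeFactors, p with hγdef
  have hγn : γ ∣ n := Nat.prod_primeFactors_dvd n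
  set Q : ℕ := n / γ with hQdef
  have hγ0 : γ ≠ 0 := by
    intro h0; rw [h0, zero_dvd_iff] at hγn; omega
  have hQγ : Q * γ = n := Nat.div_mul_cancel hγn
  have hQ0 : Q ≠ 0 := by intro h0; rw [h0, zero_mul] at hQγ; omega
  have hQdvd : ∀ q : ℕ, q.Prime → q ∣ γ → Q ∣ n / q := by
    intro q hq hqγ
    have : n / q = Q * (γ / q) := by
      rw [← hQγ, Nat.mul_div_assoc Q hqγ]
    rw [this]; exact dvd_mul_right _ _
  have hQh : ¬ (Q ∣ h) := by
    intro hdvdh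
    have hQM : (Q : ℤ) ∣ ∑ p ∈ d₁.primeFactors, ((n / p : ℕ) : ℤ) := by
      refine Finset.dvd_sum fun q hq => Int.natCast_dvd_natCast.mpr ?_
      exact hQdvd q (Nat.prime_of_mem_primeFactors hq)
        (dvd_trans (Nat.dvd_of_mem_primeFactors hq) hd₁)
    have h1 : (Q : ℤ) ∣ (∑ p ∈ d₁.primeFactors, ((n / p : ℕ) : ℤ)) - (h : ℤ) :=
      dvd_sub hQM (Int.natCast_dvd_natCast.mpr hdvdh)
    have h2 : (0 : ℤ) < (∑ p ∈ d₁.primeFactors, ((n / p : ℕ) : ℤ)) - (h : ℤ) := by omega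
    have h3 := Int.le_of_dvd h2 h1
    omega
  have hh0 : h ≠ 0 := by intro h0; exact hQh (h0 ▸ dvd_zero Q)
  have hnot : ¬ (Q.factorization ≤ h.factorization) := by
    rw [Nat.factorization_le_iff_dvd hQ0 hh0]; exact hQh
  rw [Finsupp.le_def] at hnot
  push_neg at hnot
  obtain ⟨p, hpgt⟩ := hnot
  set k : ℕ := Q.factorization p with hkdef
  have hpQ : p ^ k ∣ Q := Nat.ordProj_dvd Q p
  have hp : p.Prime := by
    have hmem : p ∈ Q.factorization.support := by
      rw [Finsupp.mem_support_iff]; omega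
    rw [Nat.support_factorization] at hmem
    exact Nat.prime_of_mem_primeFactors hmem
  have hQn : Q ∣ n := ⟨γ, hQγ.symm⟩
  have hpn : p ∣ n := dvd_trans (dvd_trans (dvd_pow_self p (by omega : k ≠ 0)) hpQ) hQn
  have hpγ : p ∣ γ := Finset.dvd_prod_of_mem _ (Nat.mem_primeFactors.mpr ⟨hp, hpn, by omega⟩)
  have hpk1n : p ^ (k + 1) ∣ n := by
    rw [← hQγ, pow_succ]
    exact mul_dvd_mul hpQ hpγ
  have hpkh : ¬ ((p : ℤ) ^ k ∣ (h : ℤ)) := by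
    rw [← Nat.cast_pow, Int.natCast_dvd_natCast]
    intro hd
    have := (Nat.Prime.pow_dvd_iff_le_factorization hp hh0).mp hd
    omega
  apply Finset.sum_eq_zero
  intro d hd
  have hdn : d ∣ n := Nat.dvd_of_mem_divisors (Finset.mem_of_mem_erase hd)
  have hsum : ((p : ℤ)) ^ k ∣ ∑ q ∈ d.primeFactors, ((n / q : ℕ) : ℤ) := by
    refine Finset.dvd_sum fun q hqm => ?_
    have hq' := Nat.prime_of_mem_primeFactors hqm
    have hqγ : q ∣ γ := Finset.dvd_prod_of_mem _
      (Nat.mem_primeFactors.mpr ⟨hq', dvd_trans (Nat.dvd_of_mem_primeFactors hqm) hdn, by omega⟩)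
    have hdv : p ^ k ∣ n / q := dvd_trans hpQ (hQdvd q hq' hqγ)
    exact_mod_cast Int.natCast_dvd_natCast.mpr hdv
  have hQint : ((p : ℤ)) ^ k ∣ (Q : ℤ) := by
    exact_mod_cast Int.natCast_dvd_natCast.mpr hpQ
  have hrne : ¬ ((p : ℤ) ^ k ∣
      ((h : ℤ) + (Q : ℤ) - ∑ q ∈ d.primeFactors, ((n / q : ℕ) : ℤ))) := by
    intro hdv
    apply hpkh
    have he : (h : ℤ) = ((h : ℤ) + (Q : ℤ) - ∑ q ∈ d.primeFactors, ((n / q : ℕ) : ℤ))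
        - (Q : ℤ) + ∑ q ∈ d.primeFactors, ((n / q : ℕ) : ℤ) := by ring
    rw [he]
    exact dvd_add (dvd_sub hdv hQint) hsum
  rw [ramanujanSum_eq_zero_of_pow n p k hn hp hpk1n _ hrne, mul_zero]
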